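/- arXiv:1203.3768 — 2 statements merged into one kernel-verified Lean document; each statement's English description precedes it below -/
import Mathlib

section
/- For continuous functions f₁,…,fₛ, g₁,…,g_{s'} : [0,1] → ℝ, the product (∫_{0<t₁<⋯<tₛ<1} ∏ fᵢ(tᵢ) dt)(∫_{0<u₁<⋯<u_{s'}<1} ∏ gⱼ(uⱼ) du) equals the sum over all (s,s')-shuffles τ of ∫_{0<v₁<⋯<v_{s+s'}<1} ∏_{k} h_{τ⁻¹(k)}(v_k) dv, where h₁,…,hₛ = f₁,…,fₛ and h_{s+1},…,h_{s+s'} = g₁,…,g_{s'}. -/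
open MeasureTheory

/-- An `(s,s')`-shuffle. -/
def IsShuffle {s s' : ℕ} (τ : Equiv.Perm (Fin (s + s'))) : Prop :=
  StrictMono (fun i : Fin s => τ (Fin.castAdd s' i)) ∧
    StrictMono (fun i : Fin s' => τ (Fin.natAdd s i))

/-- The open order simplex `{0 < t₁ < ⋯ < tₛ < 1} ⊆ ℝˢ`. -/
def orderSimplex (s : ℕ) : Set (Fin s → ℝ) :=
  {t | StrictMono t ∧ ∀ i, t i ∈ Set.Ioo (0:ℝ) 1}

lemma isOpen_orderSimplex (n : ℕ) : IsOpen (orderSimplex n) := by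
  have h1 : IsOpen {t : Fin n → ℝ | StrictMono t} := by
    have : {t : Fin n → ℝ | StrictMono t} =
        ⋂ p : Fin n × Fin n, {t | p.1 < p.2 → t p.1 < t p.2} := by
      ext t
      simp only [Set.mem_setOf_eq, Set.mem_iInter, StrictMono]
      exact ⟨fun h p hp => h hp, fun h a b hab => h (a, b) hab⟩
    rw [this]
    refine isOpen_iInter_of_finite fun p => ?_
    by_cases hp : p.1 < p.2
    · simp only [hp, forall_true_left]
      exact isOpen_lt (continuous_apply p.1) (continuous_apply p.2)
    · simp only [hp]; simp
  have h2 : IsOpen {t : Fin n → ℝ | ∀ i, t i ∈ Set.Ioo (0:ℝ) 1} := by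
    have : {t : Fin n → ℝ | ∀ i, t i ∈ Set.Ioo (0:ℝ) 1} =
        ⋂ i, (fun t : Fin n → ℝ => t i) ⁻¹' Set.Ioo 0 1 := by ext; simp
    rw [this]
    exact isOpen_iInter_of_finite fun i => (isOpen_Ioo).preimage (continuous_apply i)
  exact h1.inter h2

lemma null_noninj (n : ℕ) :
    volume {w : Fin n → ℝ | ¬ Function.Injective w} = 0 := by
  have hsub : {w : Fin n → ℝ | ¬ Function.Injective w} ⊆
      ⋃ p : Fin n × Fin n, ⋃ (_ : p.1 ≠ p.2), {w | w p.1 = w p.2} := by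
    intro w hw
    simp only [Function.Injective, not_forall] at hw
    obtain ⟨a, b, hab, hne⟩ := hw
    exact Set.mem_iUnion.2 ⟨(a, b), Set.mem_iUnion.2 ⟨hne, hab⟩⟩
  refine measure_mono_null hsub (measure_iUnion_null fun p => measure_iUnion_null fun hne => ?_)
  have : {w : Fin n → ℝ | w p.1 = w p.2} =
      (LinearMap.ker ((LinearMap.proj p.1 : (Fin n → ℝ) →ₗ[ℝ] ℝ) - LinearMap.proj p.2) :
        Submodule ℝ (Fin n → ℝ)) := by
    ext w; simp [LinearMap.mem_ker, sub_eq_zero]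
  rw [this]
  apply Measure.addHaar_submodule
  intro htop
  have : (Pi.single p.1 1 : Fin n → ℝ) ∈ LinearMap.ker
      ((LinearMap.proj p.1 : (Fin n → ℝ) →ₗ[ℝ] ℝ) - LinearMap.proj p.2) := htop ▸ trivial
  simp [LinearMap.mem_ker, sub_eq_zero, Pi.single_apply, hne, Ne.symm hne] at this

open scoped Classical in
/-- Shuffle relation for one-dimensional iterated integrals of scalar integrands:
`(∫_{0<t₁<⋯<tₛ<1} ∏ fᵢ(tᵢ)) (∫_{0<u₁<⋯<u_{s'}<1} ∏ gⱼ(uⱼ))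
  = Σ_τ ∫_{0<v₁<⋯<v_{s+s'}<1} ∏ₖ h_{τ⁻¹(k)}(vₖ)`,
the sum over `(s,s')`-shuffles `τ`, where `h = (f₁,…,fₛ,g₁,…,g_{s'})`. -/
theorem shuffle_relation_iterated_integrals (s s' : ℕ)
    (f : Fin s → ℝ → ℝ) (g : Fin s' → ℝ → ℝ)
    (hf : ∀ i, Continuous (f i)) (hg : ∀ j, Continuous (g j)) :
    (∫ t in orderSimplex s, ∏ i, f i (t i)) * (∫ u in orderSimplex s', ∏ j, g j (u j)) =
      ∑ τ ∈ Finset.univ.filter (fun τ : Equiv.Perm (Fin (s + s')) => IsShuffle τ),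
        ∫ v in orderSimplex (s + s'),
          ∏ k, Sum.elim f g (finSumFinEquiv.symm (τ.symm k)) (v k) := by
  -- abbreviations
  set h : Fin (s + s') → ℝ → ℝ := fun k => Sum.elim f g (finSumFinEquiv.symm k) with hh_def
  have hh : ∀ k, Continuous (h k) := by
    intro k
    rw [hh_def]
    rcases hk : finSumFinEquiv.symm k with i | j
    · simpa [hk] using hf i
    · simpa [hk] using hg j
  set H : (Fin (s + s') → ℝ) → ℝ := fun w => ∏ k, h k (w k) with hH_def
  have Hcont : Continuous H := continuous_finset_prod _ fun k _ => (hh k).comp (continuous_apply k)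
  have Hint : IntegrableOn H (Set.pi Set.univ fun _ : Fin (s + s') => Set.Icc (0:ℝ) 1) :=
    Hcont.continuousOn.integrableOn_compact (isCompact_univ_pi fun _ => isCompact_Icc)
  -- the splitting equivalence
  set e : (Fin (s + s') → ℝ) ≃ᵐ ((Fin s → ℝ) × (Fin s' → ℝ)) :=
    (MeasurableEquiv.piCongrLeft (fun _ => ℝ) finSumFinEquiv).symm.trans
      (MeasurableEquiv.sumPiEquivProdPi fun _ => ℝ) with he_def
  have he : MeasurePreserving e volume volume :=
    (volume_measurePreserving_sumPiEquivProdPi _).comp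
      ((volume_measurePreserving_piCongrLeft _ finSumFinEquiv).symm _)
  have he1 : ∀ w, (e w).1 = fun i => w (Fin.castAdd s' i) := by
    intro w; funext i
    simp [he_def, MeasurableEquiv.sumPiEquivProdPi, MeasurableEquiv.piCongrLeft]
  have he2 : ∀ w, (e w).2 = fun j => w (Fin.natAdd s j) := by
    intro w; funext j
    simp [he_def, MeasurableEquiv.sumPiEquivProdPi, MeasurableEquiv.piCongrLeft]
  set A : Set (Fin (s + s') → ℝ) := e ⁻¹' (orderSimplex s ×ˢ orderSimplex s') with hA_def
  have memA : ∀ w, w ∈ A ↔ (StrictMono fun i => w (Fin.castAdd s' i)) ∧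
      (StrictMono fun j => w (Fin.natAdd s j)) ∧ ∀ k, w k ∈ Set.Ioo (0:ℝ) 1 := by
    intro w
    rw [hA_def, Set.mem_preimage, Set.mem_prod]
    rw [show (e w).1 ∈ orderSimplex s ↔ _ from Iff.rfl,
      show (e w).2 ∈ orderSimplex s' ↔ _ from Iff.rfl]
    simp only [orderSimplex, Set.mem_setOf_eq, he1, he2]
    constructor
    · rintro ⟨⟨m1, i1⟩, ⟨m2, i2⟩⟩
      refine ⟨m1, m2, fun k => ?_⟩
      obtain ⟨x, rfl⟩ := finSumFinEquiv.surjective k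
      rcases x with i | j
      · simpa using i1 i
      · simpa using i2 j
    · rintro ⟨m1, m2, hioo⟩
      exact ⟨⟨m1, fun i => hioo _⟩, ⟨m2, fun j => hioo _⟩⟩
  -- Step 1 : product of integrals as an integral over A
  have step1 : (∫ t in orderSimplex s, ∏ i, f i (t i)) *
      (∫ u in orderSimplex s', ∏ j, g j (u j)) = ∫ w in A, H w := by
    rw [← setIntegral_prod_mul, ← MeasureTheory.Measure.volume_eq_prod,
      ← he.setIntegral_preimage_emb e.measurableEmbedding]
    refine setIntegral_congr_fun ((isOpen_orderSimplex s).prod (isOpen_orderSimplex s')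
        |>.measurableSet.preimage e.measurable) (fun w _ => ?_)
    rw [he1, he2]
    show _ = ∏ k, h k (w k)
    rw [← Equiv.prod_comp finSumFinEquiv (fun k => h k (w k)), Fintype.prod_sum_type]
    simp [hh_def]
  -- the pieces B τ
  set B : Equiv.Perm (Fin (s + s')) → Set (Fin (s + s') → ℝ) :=
    fun τ => (fun w => (fun k => w (τ.symm k))) ⁻¹' orderSimplex (s + s') with hB_def
  have Bmeas : ∀ τ, MeasurableSet (B τ) := by
    intro τ
    exact ((isOpen_orderSimplex (s + s')).preimage
      (continuous_pi fun k => continuous_apply _)).measurableSet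
  have Bcube : ∀ τ, B τ ⊆ Set.pi Set.univ fun _ : Fin (s + s') => Set.Icc (0:ℝ) 1 := by
    intro τ w hw k _
    have := hw.2 (τ k)
    simp only [Equiv.symm_apply_apply] at this
    exact Set.Ioo_subset_Icc_self this
  have Bint : ∀ τ, IntegrableOn H (B τ) := fun τ => Hint.mono_set (Bcube τ)
  have Bsub : ∀ τ, IsShuffle τ → B τ ⊆ A := by
    intro τ hτ w hw
    obtain ⟨hmono, hioo⟩ := hw
    rw [memA]
    refine ⟨fun a b hab => ?_, fun a b hab => ?_, fun k => ?_⟩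
    · simpa using hmono (hτ.1 hab)
    · simpa using hmono (hτ.2 hab)
    · simpa using hioo (τ k)
  have Bdisj : Set.Pairwise
      (Finset.univ.filter (fun τ : Equiv.Perm (Fin (s + s')) => IsShuffle τ) : Set _)
      (Function.onFun Disjoint B) := by
    intro τ₁ _ τ₂ _ hne
    rw [Function.onFun, Set.disjoint_left]
    intro w hw1 hw2
    have m1 : StrictMono fun k => w (τ₁.symm k) := hw1.1
    have m2 : StrictMono fun k => w (τ₂.symm k) := hw2.1
    have hr : Set.range (fun k => w (τ₁.symm k)) = Set.range (fun k => w (τ₂.symm k)) := by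
      have r1 : Set.range (fun k => w (τ₁.symm k)) = Set.range w :=
        τ₁.symm.surjective.range_comp w
      have r2 : Set.range (fun k => w (τ₂.symm k)) = Set.range w :=
        τ₂.symm.surjective.range_comp w
      rw [r1, r2]
    haveI : WellFoundedLT (Fin (s + s')) := Finite.to_wellFoundedLT
    have heq : (fun k => w (τ₁.symm k)) = fun k => w (τ₂.symm k) :=
      (m1.range_inj m2).1 hr
    have winj : Function.Injective w := by
      intro a b hab
      have : (fun k => w (τ₁.symm k)) (τ₁ a) = (fun k => w (τ₁.symm k)) (τ₁ b) := by
        simpa using hab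
      simpa using m1.injective this
    apply hne
    have hsymm : τ₁.symm = τ₂.symm :=
      Equiv.coe_fn_injective (funext fun k => winj (congrFun heq k))
    simpa using congrArg Equiv.symm hsymm
  have cover : A \ (⋃ τ ∈ Finset.univ.filter
        (fun τ : Equiv.Perm (Fin (s + s')) => IsShuffle τ), B τ) ⊆
      {w : Fin (s + s') → ℝ | ¬ Function.Injective w} := by
    intro w hw
    rcases hw with ⟨hwA, hwU⟩
    by_contra hninj
    simp only [Set.mem_setOf_eq, not_not] at hninj
    apply hwU
    set σ := Tuple.sort w with hσ
    have vmono : StrictMono (w ∘ σ) :=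
      (Tuple.monotone_sort w).strictMono_of_injective (hninj.comp σ.injective)
    rw [memA] at hwA
    obtain ⟨mc, mn, hioo⟩ := hwA
    have hsh : IsShuffle (σ⁻¹ : Equiv.Perm (Fin (s + s'))) := by
      constructor
      · intro a b hab
        have hlt : w (Fin.castAdd s' a) < w (Fin.castAdd s' b) := mc hab
        have ea : w (Fin.castAdd s' a) = (w ∘ σ) (σ⁻¹ (Fin.castAdd s' a)) := by simp
        have eb : w (Fin.castAdd s' b) = (w ∘ σ) (σ⁻¹ (Fin.castAdd s' b)) := by simp
        rw [ea, eb] at hlt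
        exact vmono.lt_iff_lt.1 hlt
      · intro a b hab
        have hlt : w (Fin.natAdd s a) < w (Fin.natAdd s b) := mn hab
        have ea : w (Fin.natAdd s a) = (w ∘ σ) (σ⁻¹ (Fin.natAdd s a)) := by simp
        have eb : w (Fin.natAdd s b) = (w ∘ σ) (σ⁻¹ (Fin.natAdd s b)) := by simp
        rw [ea, eb] at hlt
        exact vmono.lt_iff_lt.1 hlt
    have hBmem : w ∈ B (σ⁻¹ : Equiv.Perm (Fin (s + s'))) := by
      rw [hB_def]
      refine ⟨fun a b hab => ?_, fun k => hioo _⟩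
      exact vmono hab
    exact Set.mem_biUnion (Finset.mem_filter.2 ⟨Finset.mem_univ _, hsh⟩) hBmem
  -- Step 2 : each shuffle integral equals the integral over B τ
  have step2 : ∀ τ : Equiv.Perm (Fin (s + s')),
      (∫ v in orderSimplex (s + s'),
        ∏ k, Sum.elim f g (finSumFinEquiv.symm (τ.symm k)) (v k)) = ∫ w in B τ, H w := by
    intro τ
    set T : (Fin (s + s') → ℝ) ≃ᵐ (Fin (s + s') → ℝ) :=
      MeasurableEquiv.piCongrLeft (fun _ => ℝ) τ with hT_def
    have hT : ∀ w, T w = fun k => w (τ.symm k) := by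
      intro w; funext k
      simp [hT_def, MeasurableEquiv.piCongrLeft, Equiv.piCongrLeft_apply_eq_cast]
    have hTmp : MeasurePreserving T volume volume :=
      volume_measurePreserving_piCongrLeft _ τ
    rw [← hTmp.setIntegral_preimage_emb T.measurableEmbedding]
    have hpre : T ⁻¹' orderSimplex (s + s') = B τ := by
      ext w
      rw [Set.mem_preimage, hT w, hB_def]
      exact Iff.rfl
    rw [show (∫ w in T ⁻¹' orderSimplex (s + s'),
        ∏ k, Sum.elim f g (finSumFinEquiv.symm (τ.symm k)) (T w k)) =
        ∫ w in B τ, H w from ?_]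
    rw [← hpre]
    refine setIntegral_congr_fun (((isOpen_orderSimplex (s + s')).measurableSet).preimage
      T.measurable) (fun w _ => ?_)
    rw [hT w, hH_def]
    exact Equiv.prod_comp τ.symm (fun k => h k (w k))
  -- put everything together
  rw [step1, Finset.sum_congr rfl (fun τ _ => step2 τ),
    ← integral_biUnion_finset _ (fun τ _ => Bmeas τ) Bdisj (fun τ _ => Bint τ)]
  refine setIntegral_congr_set ?_
  rw [ae_eq_set]
  constructor
  · exact measure_mono_null cover (null_noninj _)
  · refine measure_mono_null (fun w hw => ?_) (measure_empty (μ := volume))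
    exfalso
    apply hw.2
    have hw1 := hw.1
    simp only [Set.mem_iUnion, Finset.mem_filter, Finset.mem_univ, true_and] at hw1
    obtain ⟨τ, hτ, hwB⟩ := hw1
    exact Bsub τ hτ hwB
end

section
/- In the setting of the previous composition law, for a_k = (α₁−1)⋯(α_k−1)·α_{k+1}⋯α_r one has I_{ω₁⋯ωₛ}(a_k) = Σ_{0<i₁<⋯<i_k≤i_{k+1}≤⋯≤i_{r−1}≤s} ∏_{j=1}^{r} I_{ω_{i_{j−1}+1}⋯ω_{i_j}}(α_j), where i₀ = 0 and i_r = s (the induction step in the proof of the vanishing on (α₁−1)⋯(α_r−1) for s < r). -/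
section Aux

variable {Ω Γ A : Type*} [Group Γ] [CommRing A]

/-- The index set of admissible sequences. -/
def Tset (r s k : ℕ) : Finset (Fin (r + 1) → Fin (s + 1)) :=
  Finset.univ.filter (fun i : Fin (r + 1) → Fin (s + 1) =>
    i 0 = 0 ∧ i (Fin.last r) = Fin.last s ∧
      (∀ j : Fin r, (j : ℕ) < k → i j.castSucc < i j.succ) ∧
      (∀ j : Fin r, i j.castSucc ≤ i j.succ))

variable (I : List Ω → Γ → A)

lemma I_one (hempty : ∀ g : Γ, I [] g = 1)
    (hcomp : ∀ (w : List Ω) (g₁ g₂ : Γ),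
      I w (g₁ * g₂) =
        ∑ j ∈ Finset.range (w.length + 1), I (w.take j) g₁ * I (w.drop j) g₂)
    (w : List Ω) (hw : w ≠ []) : I w (1 : Γ) = 0 := by
  suffices h : ∀ n, ∀ w : List Ω, w.length = n → w ≠ [] → I w (1 : Γ) = 0 from
    h w.length w rfl hw
  intro n
  induction n using Nat.strong_induction_on with
  | _ n ih =>
    intro w hn hw
    have h := hcomp w 1 1
    rw [one_mul, hn] at h
    obtain ⟨m, rfl⟩ : ∃ m, n = m + 1 := by
      cases n with
      | zero => exact absurd (List.length_eq_zero_iff.mp hn) hw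
      | succ m => exact ⟨m, rfl⟩
    rw [Finset.sum_range_succ, Finset.sum_range_succ'] at h
    have htake : w.take (m + 1) = w := by rw [← hn]; exact List.take_length
    have hdrop : w.drop (m + 1) = [] := by
      rw [← hn]; exact List.drop_length
    rw [htake, hdrop, hempty] at h
    simp only [List.take_zero, List.drop_zero, hempty, one_mul, mul_one] at h
    have hmid : ∀ j ∈ Finset.range m, I (w.take (j + 1)) 1 * I (w.drop (j + 1)) 1 = 0 := by
      intro j hj
      rw [Finset.mem_range] at hj
      have h1 : (w.take (j + 1)).length = j + 1 := by
        rw [List.length_take, hn]; omega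
      rw [ih (j + 1) (by omega) _ h1 (by intro hc; rw [hc] at h1; simp at h1), zero_mul]
    rw [Finset.sum_congr rfl hmid, Finset.sum_const_zero] at h
    linear_combination -h

variable (Ihat : List Ω → MonoidAlgebra ℤ Γ → A)
variable (hIhat : ∀ (w : List Ω) (x : MonoidAlgebra ℤ Γ),
      Ihat w x = x.coeff.sum fun g c => c • I w g)

include hIhat

lemma Ihat_add (w : List Ω) (x y : MonoidAlgebra ℤ Γ) :
    Ihat w (x + y) = Ihat w x + Ihat w y := by
  rw [hIhat, hIhat, hIhat, MonoidAlgebra.coeff_add]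
  exact Finsupp.sum_add_index' (by intro g; rw [zero_smul])
    (by intro g c₁ c₂; rw [add_smul])

lemma Ihat_sub (w : List Ω) (x y : MonoidAlgebra ℤ Γ) :
    Ihat w (x - y) = Ihat w x - Ihat w y := by
  rw [hIhat, hIhat, hIhat, MonoidAlgebra.coeff_sub]
  exact Finsupp.sum_sub_index (by intro g c₁ c₂; rw [sub_smul])

lemma Ihat_one (hempty : ∀ g : Γ, I [] g = 1)
    (hcomp : ∀ (w : List Ω) (g₁ g₂ : Γ),
      I w (g₁ * g₂) =
        ∑ j ∈ Finset.range (w.length + 1), I (w.take j) g₁ * I (w.drop j) g₂)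
    (w : List Ω) :
    Ihat w (1 : MonoidAlgebra ℤ Γ) = if w.isEmpty then 1 else 0 := by
  rw [hIhat]
  have : (1 : MonoidAlgebra ℤ Γ).coeff = Finsupp.single 1 1 := rfl
  rw [this, Finsupp.sum_single_index (by rw [zero_smul]), one_smul]
  cases w with
  | nil => simp [hempty]
  | cons a l => simp [I_one I hempty hcomp (a :: l) (by simp)]

lemma Ihat_of_mul
    (hcomp : ∀ (w : List Ω) (g₁ g₂ : Γ),
      I w (g₁ * g₂) =
        ∑ j ∈ Finset.range (w.length + 1), I (w.take j) g₁ * I (w.drop j) g₂)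
    (w : List Ω) (g : Γ) (x : MonoidAlgebra ℤ Γ) :
    Ihat w (MonoidAlgebra.of ℤ Γ g * x) =
      ∑ j ∈ Finset.range (w.length + 1), I (w.take j) g * Ihat (w.drop j) x := by
  induction x using MonoidAlgebra.induction with
  | zero =>
    rw [mul_zero]
    have hz : ∀ v : List Ω, Ihat v (0 : MonoidAlgebra ℤ Γ) = 0 := by
      intro v; rw [hIhat]; exact Finsupp.sum_zero_index
    simp [hz]
  | single_add g' c f hg' hc ihx =>
    rw [mul_add, Ihat_add I Ihat hIhat, ihx]
    have hsingle : ∀ (v : List Ω) (h : Γ) (c : ℤ),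
        Ihat v (MonoidAlgebra.single h c) = c • I v h := by
      intro v h c
      rw [hIhat]
      exact Finsupp.sum_single_index (by rw [zero_smul])
    have hofs : MonoidAlgebra.of ℤ Γ g * MonoidAlgebra.single g' c
        = MonoidAlgebra.single (g * g') c := by
      rw [MonoidAlgebra.of_apply, MonoidAlgebra.single_mul_single, one_mul]
    rw [hofs, hsingle, hcomp]
    simp only [Ihat_add I Ihat hIhat, hsingle]
    rw [Finset.smul_sum, ← Finset.sum_add_distrib]
    refine Finset.sum_congr rfl fun j _ => ?_
    simp only [zsmul_eq_mul]
    ring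


omit hIhat in
lemma mem_Tset {r s k : ℕ} (i : Fin (r + 1) → Fin (s + 1)) :
    i ∈ Tset r s k ↔ ((i 0 : ℕ) = 0 ∧ ((i (Fin.last r)) : ℕ) = s ∧
      (∀ j : Fin r, (j : ℕ) < k → (i j.castSucc : ℕ) < (i j.succ : ℕ)) ∧
      (∀ j : Fin r, (i j.castSucc : ℕ) ≤ (i j.succ : ℕ))) := by
  rw [Tset, Finset.mem_filter]
  simp only [Finset.mem_univ, true_and, Fin.ext_iff, Fin.lt_def, Fin.le_def, Fin.val_zero,
    Fin.val_last]

omit [Group Γ] hIhat in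
lemma Tset_mono {r s : ℕ} {i : Fin (r + 1) → Fin (s + 1)}
    (h : ∀ j : Fin r, (i j.castSucc : ℕ) ≤ (i j.succ : ℕ)) {a b : Fin (r + 1)}
    (hab : a ≤ b) : (i a : ℕ) ≤ (i b : ℕ) := by
  have hm : Monotone i := Fin.monotone_iff_le_succ.mpr (fun j => Fin.le_def.mpr (h j))
  exact Fin.le_def.mp (hm hab)

omit hIhat in
lemma sum_T_succ (I : List Ω → Γ → A) (r s k : ℕ) (α : ℕ → Γ) (w : List Ω)
    (hw : w.length = s) :
    ∑ i ∈ Tset (r + 1) s k, ∏ j : Fin (r + 1),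
        I ((w.drop (i j.castSucc)).take ((i j.succ : ℕ) - (i j.castSucc : ℕ))) (α j)
    = ∑ j ∈ Finset.Ico (min k 1) (s + 1), I (w.take j) (α 0) *
        ∑ i' ∈ Tset r (s - j) (k - 1), ∏ m : Fin r,
          I (((w.drop j).drop (i' m.castSucc)).take
              ((i' m.succ : ℕ) - (i' m.castSucc : ℕ))) (α (m + 1)) := by
  have hmaps : ∀ i ∈ Tset (r + 1) s k,
      (i (Fin.succ 0) : ℕ) ∈ Finset.range (s + 1) :=
    fun i _ => Finset.mem_range.mpr (Nat.lt_succ_of_le (Fin.is_le _))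
  rw [← Finset.sum_fiberwise_of_maps_to hmaps]
  have key : ∀ j ∈ Finset.range (s + 1),
      (∑ i ∈ (Tset (r + 1) s k).filter (fun i => (i (Fin.succ 0) : ℕ) = j),
        ∏ m : Fin (r + 1),
          I ((w.drop (i m.castSucc)).take ((i m.succ : ℕ) - (i m.castSucc : ℕ))) (α m))
      = if min k 1 ≤ j then I (w.take j) (α 0) *
          ∑ i' ∈ Tset r (s - j) (k - 1), ∏ m : Fin r,
            I (((w.drop j).drop (i' m.castSucc)).take
                ((i' m.succ : ℕ) - (i' m.castSucc : ℕ))) (α (m + 1)) else 0 := by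
    intro j hj
    rw [Finset.mem_range] at hj
    have hjs : j ≤ s := by omega
    by_cases hlo : min k 1 ≤ j
    · rw [if_pos hlo, Finset.mul_sum]
      refine Finset.sum_nbij'
        (i := fun i => fun m : Fin (r + 1) =>
          (⟨(i m.succ : ℕ) - j, by have := Fin.is_le (i m.succ); omega⟩ : Fin (s - j + 1)))
        (j := fun i' =>
          Fin.cases (0 : Fin (s + 1))
            (fun m' => (⟨j + (i' m' : ℕ), by have := Fin.is_le (i' m'); omega⟩ : Fin (s + 1))))
        ?_ ?_ ?_ ?_ ?_
      · -- forward membership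
        intro i hi
        rw [Finset.mem_filter, mem_Tset] at hi
        obtain ⟨⟨h0, hlast, hstrict, hweak⟩, h1⟩ := hi
        have hmono : ∀ a b : Fin (r + 1 + 1), a ≤ b → (i a : ℕ) ≤ (i b : ℕ) :=
          fun a b hab => Tset_mono hweak hab
        rw [mem_Tset]
        refine ⟨?_, ?_, ?_, ?_⟩
        · show (i ((0 : Fin (r + 1)).succ) : ℕ) - j = 0
          omega
        · show (i ((Fin.last r).succ) : ℕ) - j = s - j
          have hlast' : (i ((Fin.last r).succ) : ℕ) = s := by
            rw [Fin.succ_last]; exact hlast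
          omega
        · intro m hm
          show (i (m.castSucc.succ) : ℕ) - j < (i (m.succ.succ) : ℕ) - j
          rw [Fin.succ_castSucc]
          have h2 := hstrict m.succ (by simp only [Fin.val_succ]; omega)
          have h4 : (i (Fin.succ 0) : ℕ) ≤ (i (m.succ.castSucc) : ℕ) := by
            refine hmono _ _ ?_
            rw [Fin.le_def]
            simp [Fin.val_succ]
          omega
        · intro m
          show (i (m.castSucc.succ) : ℕ) - j ≤ (i (m.succ.succ) : ℕ) - j
          rw [Fin.succ_castSucc]
          have h3 := hweak m.succ
          omega
      · -- backward membership
        intro i' hi'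
        rw [mem_Tset] at hi'
        obtain ⟨h0, hlast, hstrict, hweak⟩ := hi'
        rw [Finset.mem_filter, mem_Tset]
        refine ⟨⟨?_, ?_, ?_, ?_⟩, ?_⟩
        · simp
        · have e : (Fin.last (r + 1)) = (Fin.last r).succ := by rw [Fin.succ_last]
          beta_reduce
          rw [e, Fin.cases_succ]
          show j + (i' (Fin.last r) : ℕ) = s
          omega
        · intro m
          induction m using Fin.cases with
          | zero =>
            intro hm
            beta_reduce
            rw [Fin.castSucc_zero, Fin.cases_zero, Fin.cases_succ]
            show ((0 : Fin (s + 1)) : ℕ) < j + (i' 0 : ℕ)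
            have hm' : 0 < k := by simpa using hm
            simp only [Fin.val_zero]
            omega
          | succ m' =>
            intro hm
            beta_reduce
            rw [← Fin.succ_castSucc, Fin.cases_succ, Fin.cases_succ]
            show j + (i' m'.castSucc : ℕ) < j + (i' m'.succ : ℕ)
            have hm' : (m' : ℕ) < k - 1 := by
              simp only [Fin.val_succ] at hm; omega
            have := hstrict m' hm'
            omega
        · intro m
          induction m using Fin.cases with
          | zero =>
            beta_reduce
            rw [Fin.castSucc_zero, Fin.cases_zero, Fin.cases_succ]
            show ((0 : Fin (s + 1)) : ℕ) ≤ j + (i' 0 : ℕ)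
            simp
          | succ m' =>
            beta_reduce
            rw [← Fin.succ_castSucc, Fin.cases_succ, Fin.cases_succ]
            show j + (i' m'.castSucc : ℕ) ≤ j + (i' m'.succ : ℕ)
            have := hweak m'
            omega
        · beta_reduce
          rw [Fin.cases_succ]
          show j + (i' 0 : ℕ) = j
          omega
      · -- left inverse
        intro i hi
        rw [Finset.mem_filter, mem_Tset] at hi
        obtain ⟨⟨h0, hlast, hstrict, hweak⟩, h1⟩ := hi
        have hmono : ∀ a b : Fin (r + 1 + 1), a ≤ b → (i a : ℕ) ≤ (i b : ℕ) :=
          fun a b hab => Tset_mono hweak hab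
        funext m
        induction m using Fin.cases with
        | zero =>
          beta_reduce
          rw [Fin.cases_zero]
          refine (Fin.ext ?_).symm
          show (i (0 : Fin (r + 1 + 1)) : ℕ) = (0 : ℕ)
          omega
        | succ m' =>
          beta_reduce
          rw [Fin.cases_succ]
          refine Fin.ext ?_
          show j + ((i m'.succ : ℕ) - j) = (i m'.succ : ℕ)
          have h4 : (i (Fin.succ 0) : ℕ) ≤ (i m'.succ : ℕ) := by
            refine hmono _ _ ?_
            rw [Fin.le_def]
            simp [Fin.val_succ]
          omega
      · -- right inverse
        intro i' hi'
        funext m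
        refine Fin.ext ?_
        show ((Fin.cases (0 : Fin (s + 1))
            (fun m' => (⟨j + (i' m' : ℕ), by have := Fin.is_le (i' m'); omega⟩ : Fin (s + 1)))
            m.succ : Fin (s + 1)) : ℕ) - j = (i' m : ℕ)
        beta_reduce
        rw [Fin.cases_succ]
        show (j + (i' m : ℕ)) - j = (i' m : ℕ)
        omega
      · -- summand equality
        intro i hi
        rw [Finset.mem_filter, mem_Tset] at hi
        obtain ⟨⟨h0, hlast, hstrict, hweak⟩, h1⟩ := hi
        have hmono : ∀ a b : Fin (r + 1 + 1), a ≤ b → (i a : ℕ) ≤ (i b : ℕ) :=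
          fun a b hab => Tset_mono hweak hab
        rw [Fin.prod_univ_succ]
        congr 1
        · have e1 : (i ((0 : Fin (r + 1)).castSucc) : ℕ) = 0 := by
            rw [Fin.castSucc_zero]; exact h0
          rw [e1, h1, Nat.sub_zero, List.drop_zero]
          norm_num
        · refine Finset.prod_congr rfl fun m _ => ?_
          have e : m.castSucc.succ = m.succ.castSucc := Fin.succ_castSucc m
          have ha : j ≤ (i (m.succ.castSucc) : ℕ) := by
            have h4 : (i (Fin.succ 0) : ℕ) ≤ (i (m.succ.castSucc) : ℕ) := by
              refine hmono _ _ ?_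
              rw [Fin.le_def]
              simp [Fin.val_succ]
            omega
          show I ((w.drop (i (m.succ.castSucc) : ℕ)).take
              ((i (m.succ.succ) : ℕ) - (i (m.succ.castSucc) : ℕ))) (α (m.succ : ℕ))
            = I (((w.drop j).drop ((i (m.castSucc.succ) : ℕ) - j)).take
              (((i (m.succ.succ) : ℕ) - j) - ((i (m.castSucc.succ) : ℕ) - j))) (α ((m : ℕ) + 1))
          rw [e, List.drop_drop]
          have e3 : j + ((i (m.succ.castSucc) : ℕ) - j) = (i (m.succ.castSucc) : ℕ) := by omega
          have e4 : (((i (m.succ.succ) : ℕ)) - j) - (((i (m.succ.castSucc) : ℕ)) - j)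
              = (i (m.succ.succ) : ℕ) - (i (m.succ.castSucc) : ℕ) := by omega
          rw [e3, e4, Fin.val_succ]
    · rw [if_neg hlo]
      rw [min_le_iff] at hlo
      refine Finset.sum_eq_zero fun i hi => ?_
      exfalso
      rw [Finset.mem_filter, mem_Tset] at hi
      obtain ⟨⟨h0, hlast, hstrict, hweak⟩, h1⟩ := hi
      have hstrict0 := hstrict 0 (by simp only [Fin.val_zero]; omega)
      rw [Fin.castSucc_zero] at hstrict0
      omega
  rw [Finset.sum_congr rfl key, Finset.range_eq_Ico, ← Finset.sum_filter]
  congr 1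
  ext x
  simp only [Finset.mem_filter, Finset.mem_Ico]
  omega

lemma aux (hempty : ∀ g : Γ, I [] g = 1)
    (hcomp : ∀ (w : List Ω) (g₁ g₂ : Γ),
      I w (g₁ * g₂) =
        ∑ j ∈ Finset.range (w.length + 1), I (w.take j) g₁ * I (w.drop j) g₂)
    (r : ℕ) :
    ∀ (k : ℕ) (α : ℕ → Γ) (w : List Ω),
      Ihat w (List.ofFn (fun j : Fin r =>
          if (j : ℕ) < k then MonoidAlgebra.of ℤ Γ (α j) - 1
          else MonoidAlgebra.of ℤ Γ (α j))).prod
      = ∑ i ∈ Tset r w.length k, ∏ j : Fin r,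
          I ((w.drop (i j.castSucc)).take ((i j.succ : ℕ) - (i j.castSucc : ℕ))) (α j) := by
  induction r with
  | zero =>
    intro k α w
    rw [List.ofFn_zero, List.prod_nil, Ihat_one I Ihat hIhat hempty hcomp]
    rcases hs : w.length with _ | n
    · have hwnil : w = [] := List.length_eq_zero_iff.mp hs
      subst hwnil
      simp only [List.isEmpty_nil, if_true, List.length_nil]
      have hT : Tset 0 0 k = Finset.univ := by
        ext i
        simp only [mem_Tset, Finset.mem_univ, iff_true]
        have h1 := (i 0).isLt
        have h2 := (i (Fin.last 0)).isLt
        exact ⟨by omega, by omega, fun j _ => j.elim0, fun j => j.elim0⟩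
      rw [hT]
      simp
    · have hwne : w ≠ [] := by intro hc; rw [hc] at hs; simp at hs
      rw [if_neg (by simpa [List.isEmpty_iff] using hwne)]
      have hT : Tset 0 (n + 1) k = ∅ := by
        refine Finset.eq_empty_of_forall_notMem fun i => ?_
        rw [mem_Tset]
        rintro ⟨hi0, hilast, -, -⟩
        have e : (Fin.last 0 : Fin 1) = 0 := rfl
        rw [e] at hilast
        omega
      rw [hT, Finset.sum_empty]
  | succ r ih =>
    intro k α w
    rw [List.ofFn_succ, List.prod_cons]
    beta_reduce
    have hfun : (fun m : Fin r =>
          (if ((m.succ : Fin (r + 1)) : ℕ) < k then MonoidAlgebra.of ℤ Γ (α ↑m.succ) - 1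
          else MonoidAlgebra.of ℤ Γ (α ↑m.succ)))
        = (fun m : Fin r =>
          if (m : ℕ) < k - 1 then MonoidAlgebra.of ℤ Γ ((fun n => α (n + 1)) ↑m) - 1
          else MonoidAlgebra.of ℤ Γ ((fun n => α (n + 1)) ↑m)) := by
      funext m
      simp only [Fin.val_succ]
      by_cases hmk : (m : ℕ) + 1 < k
      · rw [if_pos hmk, if_pos (by omega)]
      · rw [if_neg hmk, if_neg (by omega)]
    have hih : ∀ u : List Ω, Ihat u (List.ofFn fun m : Fin r =>
          if ((m.succ : Fin (r + 1)) : ℕ) < k then MonoidAlgebra.of ℤ Γ (α ↑m.succ) - 1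
          else MonoidAlgebra.of ℤ Γ (α ↑m.succ)).prod
        = ∑ i ∈ Tset r u.length (k - 1), ∏ m : Fin r,
            I ((u.drop (i m.castSucc)).take ((i m.succ : ℕ) - (i m.castSucc : ℕ)))
              (α ((m : ℕ) + 1)) := by
      intro u
      rw [hfun]
      exact ih (k - 1) (fun n => α (n + 1)) u
    rw [sum_T_succ I r w.length k α w rfl]
    cases k with
    | zero =>
      rw [if_neg (Nat.not_lt_zero _)]
      rw [Ihat_of_mul I Ihat hIhat hcomp w _ _]
      rw [show min 0 1 = 0 from rfl, ← Finset.range_eq_Ico]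
      refine Finset.sum_congr rfl fun j hj => ?_
      rw [hih (w.drop j), List.length_drop]
      simp only [Fin.val_zero]
    | succ k' =>
      rw [if_pos (by simp only [Fin.val_zero]; omega)]
      rw [sub_mul, one_mul, Ihat_sub I Ihat hIhat, Ihat_of_mul I Ihat hIhat hcomp]
      rw [Finset.range_eq_Ico, Finset.sum_eq_sum_Ico_succ_bot (Nat.succ_pos _)]
      rw [List.take_zero, List.drop_zero, hempty, one_mul, add_sub_cancel_left]
      rw [min_eq_right (by omega : 1 ≤ k' + 1)]
      refine Finset.sum_congr rfl fun j hj => ?_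
      rw [hih (w.drop j), List.length_drop]
      simp only [Fin.val_zero]

end Aux


/-- The induction step for the composition law: with
`a_k = (α₁−1)⋯(α_k−1)·α_{k+1}⋯α_r` one has
`I_{ω₁⋯ωₛ}(a_k) = Σ_{0<i₁<⋯<i_k≤i_{k+1}≤⋯≤i_{r−1}≤s} ∏ⱼ I_{ω_{i_{j−1}+1}⋯ω_{i_j}}(αⱼ)`,
with conventions `i₀ = 0`, `i_r = s`. -/
theorem iterated_integral_induction_step
    (Ω : Type*) (Γ : Type*) [Group Γ] (A : Type*) [CommRing A]
    (I : List Ω → Γ → A)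
    (hempty : ∀ g : Γ, I [] g = 1)
    (hcomp : ∀ (w : List Ω) (g₁ g₂ : Γ),
      I w (g₁ * g₂) =
        ∑ j ∈ Finset.range (w.length + 1), I (w.take j) g₁ * I (w.drop j) g₂)
    (Ihat : List Ω → MonoidAlgebra ℤ Γ → A)
    (hIhat : ∀ (w : List Ω) (x : MonoidAlgebra ℤ Γ),
      Ihat w x = x.coeff.sum fun g c => c • I w g)
    (r s k : ℕ) (hk : k ≤ r) (α : Fin r → Γ) (w : List Ω) (hw : w.length = s) :
    Ihat w (List.ofFn (fun j : Fin r =>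
        if (j : ℕ) < k then MonoidAlgebra.of ℤ Γ (α j) - 1
        else MonoidAlgebra.of ℤ Γ (α j))).prod =
      ∑ i ∈ Finset.univ.filter (fun i : Fin (r + 1) → Fin (s + 1) =>
          i 0 = 0 ∧ i (Fin.last r) = Fin.last s ∧
            (∀ j : Fin r, (j : ℕ) < k → i j.castSucc < i j.succ) ∧
            (∀ j : Fin r, i j.castSucc ≤ i j.succ)),
        ∏ j : Fin r,
          I ((w.drop (i j.castSucc)).take ((i j.succ : ℕ) - (i j.castSucc : ℕ))) (α j) := by
  subst hw
  have hα : ∀ j : Fin r, (fun n => if h : n < r then α ⟨n, h⟩ else 1) (j : ℕ) = α j :=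
    fun j => by simp [j.isLt]
  have h := aux I Ihat hIhat hempty hcomp r k (fun n => if h : n < r then α ⟨n, h⟩ else 1) w
  have e1 : (fun j : Fin r => if (j : ℕ) < k then MonoidAlgebra.of ℤ Γ (α j) - 1
        else MonoidAlgebra.of ℤ Γ (α j))
      = (fun j : Fin r => if (j : ℕ) < k
        then MonoidAlgebra.of ℤ Γ ((fun n => if h : n < r then α ⟨n, h⟩ else 1) (j : ℕ)) - 1
        else MonoidAlgebra.of ℤ Γ ((fun n => if h : n < r then α ⟨n, h⟩ else 1) (j : ℕ))) := by
    funext j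
    rw [hα j]
  rw [e1, h]
  refine Finset.sum_congr rfl fun i hi => Finset.prod_congr rfl fun j _ => ?_
  simp [j.isLt]
end
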